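/- For n ≥ 1 and 1 ≤ m ≤ min(k+1, n), there exists a k-bounded perturbation of (1, ..., n) whose first element is m; hence the set of possible first elements of k-bounded perturbations of (1,...,n) is exactly {1, ..., min(k+1, n)}. -/

import Mathlib

/-- T is a k-bounded perturbation of S: T is a permutation of S and whenever the pair
of positions i < j of S is inverted in T (i.e. S's j-th entry appears before its i-th
entry in T), then j - i <= k. -/
def IsKBoundedPerturbation {α : Type*} [DecidableEq α] (k : ℕ) (S T : List α) : Prop :=
  T.Perm S ∧ ∀ i j : Fin S.length, (i : ℕ) < (j : ℕ) →
    T.idxOf (S.get j) < T.idxOf (S.get i) → (j : ℕ) - (i : ℕ) ≤ k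

lemma idx_range' (len : ℕ) : ∀ s x : ℕ, s ≤ x → x < s + len →
    (List.range' s len).idxOf x = x - s := by
  induction len with
  | zero => intro s x h1 h2; omega
  | succ n ih =>
    intro s x h1 h2
    rw [List.range'_succ]
    rcases eq_or_ne x s with rfl | hne
    · simp
    · rw [List.idxOf_cons_ne _ (Ne.symm hne), ih (s+1) x (by omega) (by omega)]
      omega

lemma idx_T (n m x : ℕ) (hm1 : 1 ≤ m) (hmn : m ≤ n) (hx1 : 1 ≤ x) (hxn : x ≤ n) :
    (m :: (List.range' 1 (m-1) ++ List.range' (m+1) (n-m))).idxOf x =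
      if x = m then 0 else if x < m then x else x - 1 := by
  rcases eq_or_ne x m with rfl | h
  · simp
  · rw [List.idxOf_cons_ne _ (Ne.symm h)]
    by_cases hlt : x < m
    · rw [List.idxOf_append_of_mem (by rw [List.mem_range'_1]; omega),
        idx_range' _ 1 x (by omega) (by omega)]
      simp [hlt, h]
      omega
    · rw [List.idxOf_append_of_notMem (by rw [List.mem_range'_1]; omega),
        idx_range' _ (m+1) x (by omega) (by omega)]
      simp [hlt, h, List.length_range']
      omega

/-- the possible first elements of k-bounded perturbations of (1,...,n)
are exactly 1, ..., min(k+1, n). -/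
theorem stmt16 (n k : ℕ) (hn : 1 ≤ n) :
    (∀ m, 1 ≤ m → m ≤ min (k + 1) n →
      ∃ T : List ℕ, IsKBoundedPerturbation k (List.range' 1 n) T ∧ T.head? = some m) ∧
    (∀ (T : List ℕ) (m : ℕ), IsKBoundedPerturbation k (List.range' 1 n) T →
      T.head? = some m → 1 ≤ m ∧ m ≤ min (k + 1) n) := by
  constructor
  · intro m hm1 hm2
    have hmk : m ≤ k + 1 := le_trans hm2 (min_le_left _ _)
    have hmn : m ≤ n := le_trans hm2 (min_le_right _ _)
    refine ⟨m :: (List.range' 1 (m-1) ++ List.range' (m+1) (n-m)), ⟨?_, ?_⟩, rfl⟩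
    · have hsplit : List.range' 1 (m-1) ++ (m :: List.range' (m+1) (n-m)) = List.range' 1 n := by
        have := List.range'_append_1 (s := 1) (m := m-1) (n := n-m+1)
        rw [List.range'_succ] at this
        have h1 : 1 + (m-1) = m := by omega
        have h2 : m + 1 = m + 1 := rfl
        rw [h1] at this
        rw [show m - 1 + (n - m + 1) = n from by omega] at this
        simpa using this
      rw [← hsplit]
      exact (List.perm_middle).symm
    · intro i j hij hinv
      have hlen : (List.range' 1 n).length = n := List.length_range'
      have hi : (i : ℕ) < n := lt_of_lt_of_le i.2 (le_of_eq hlen)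
      have hj : (j : ℕ) < n := lt_of_lt_of_le j.2 (le_of_eq hlen)
      have hgi : (List.range' 1 n).get i = 1 + (i : ℕ) := by
        simpa using List.get_range' (i : ℕ) i.2
      have hgj : (List.range' 1 n).get j = 1 + (j : ℕ) := by
        simpa using List.get_range' (j : ℕ) j.2
      rw [hgi, hgj, idx_T n m _ hm1 hmn (by omega) (by omega),
        idx_T n m _ hm1 hmn (by omega) (by omega)] at hinv
      split_ifs at hinv <;> omega
  · rintro T m ⟨hperm, hinv⟩ hhead
    obtain ⟨t, rfl⟩ : ∃ t, T = m :: t := by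
      cases T with
      | nil => simp at hhead
      | cons a t => simp at hhead; subst hhead; exact ⟨t, rfl⟩
    have hmem : m ∈ List.range' 1 n := hperm.mem_iff.mp List.mem_cons_self
    rw [List.mem_range'_1] at hmem
    refine ⟨hmem.1, le_min ?_ (by omega)⟩
    by_contra hc
    push_neg at hc
    have hlen : (List.range' 1 n).length = n := List.length_range'
    have h1n : (0 : ℕ) < n := hn
    have hmn : m - 1 < n := by omega
    have key := hinv ⟨0, by omega⟩ ⟨m - 1, by omega⟩ (by simp; omega)
    simp only [List.get_eq_getElem, List.getElem_range'] at key
    rw [show 1 + 1 * (m - 1) = m from by omega, show 1 + 1 * 0 = 1 from rfl] at key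
    have h1m : (1 : ℕ) ≠ m := by omega
    have h1t : (1 : ℕ) ∈ m :: t := hperm.mem_iff.mpr (by rw [List.mem_range'_1]; omega)
    have hidx1 : (m :: t).idxOf 1 = ((t.idxOf 1) + 1) := by
      rw [List.idxOf_cons_ne _ (Ne.symm h1m)]
    have hidxm : (m :: t).idxOf m = 0 := List.idxOf_cons_self
    rw [hidx1, hidxm] at key
    have := key (by omega)
    omega
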